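/- Suppose a function S: [0,∞)² → (0,1] is continuous, satisfies S(0,0)=1, and satisfies the bivariate lack-of-memory property S(t+s₁, t+s₂) = S(t,t)·S(s₁,s₂) for all t, s₁, s₂ ≥ 0, and additionally s ↦ S(s,0) and s ↦ S(0,s) are exponential survival functions. Then there exist λ₁, λ₂, λ₁₂ ≥ 0 such that S(t₁,t₂) = exp(−λ₁t₁ − λ₂t₂ − λ₁₂ max{t₁,t₂}) for all t₁, t₂ ≥ 0, provided S is a valid bivariate survival function (i.e., 2-increasing in the survival sense). -/

import Mathlib

set_option maxHeartbeats 1000000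


/-- Marshall–Olkin characterization of the bivariate lack-of-memory property. -/
theorem bivariate_LOM_characterizes_MO (S : ℝ → ℝ → ℝ)
    (hrange : ∀ t1 t2 : ℝ, 0 ≤ t1 → 0 ≤ t2 → S t1 t2 ∈ Set.Ioc (0:ℝ) 1)
    (hcont : ContinuousOn (fun p : ℝ × ℝ => S p.1 p.2) (Set.Ici 0 ×ˢ Set.Ici 0))
    (h00 : S 0 0 = 1)
    (hLOM : ∀ t s1 s2 : ℝ, 0 ≤ t → 0 ≤ s1 → 0 ≤ s2 →
      S (t + s1) (t + s2) = S t t * S s1 s2)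
    (hmarg1 : ∃ m1 : ℝ, 0 < m1 ∧ ∀ s : ℝ, 0 ≤ s → S s 0 = Real.exp (-m1 * s))
    (hmarg2 : ∃ m2 : ℝ, 0 < m2 ∧ ∀ s : ℝ, 0 ≤ s → S 0 s = Real.exp (-m2 * s))
    (h2incr : ∀ a1 b1 a2 b2 : ℝ, 0 ≤ a1 → a1 ≤ b1 → 0 ≤ a2 → a2 ≤ b2 →
      0 ≤ S a1 a2 - S a1 b2 - S b1 a2 + S b1 b2) :
    ∃ l1 l2 l12 : ℝ, 0 ≤ l1 ∧ 0 ≤ l2 ∧ 0 ≤ l12 ∧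
      ∀ t1 t2 : ℝ, 0 ≤ t1 → 0 ≤ t2 →
        S t1 t2 = Real.exp (-l1 * t1 - l2 * t2 - l12 * max t1 t2) := by
  obtain ⟨m1, hm1, hS1⟩ := hmarg1
  obtain ⟨m2, hm2, hS2⟩ := hmarg2
  have hpos : ∀ t : ℝ, 0 ≤ t → 0 < S t t := fun t ht => (hrange t t ht ht).1
  -- the diagonal log
  set h : ℝ → ℝ := fun t => Real.log (S t t) with hh_def
  have h0 : h 0 = 0 := by simp [hh_def, h00]
  have hadd : ∀ a b : ℝ, 0 ≤ a → 0 ≤ b → h (a + b) = h a + h b := by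
    intro a b ha hb
    have := hLOM a b b ha hb hb
    simp only [hh_def]
    rw [this, Real.log_mul (hpos a ha).ne' (hpos b hb).ne']
  have key3 : ∀ a b c : ℝ, 0 ≤ a → 0 ≤ b → 0 ≤ c →
      h (a + b + c) = h a + h b + h c := by
    intro a b c ha hb hc
    rw [hadd (a + b) c (by linarith) hc, hadd a b ha hb]
  -- continuity of h on [0, ∞)
  have hcont_diag : ContinuousOn (fun t : ℝ => S t t) (Set.Ici 0) := by
    have : ContinuousOn (fun t : ℝ => (fun p : ℝ × ℝ => S p.1 p.2) (t, t)) (Set.Ici 0) :=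
      hcont.comp (Continuous.continuousOn (by continuity))
        (fun t ht => Set.mk_mem_prod ht ht)
    exact this
  have hcont_h : ContinuousOn h (Set.Ici 0) :=
    hcont_diag.log (fun t ht => (hpos t ht).ne')
  -- the extended additive map
  have hadd_ext : ∀ x y : ℝ,
      h (max (x + y) 0) - h (max (-(x + y)) 0)
        = (h (max x 0) - h (max (-x) 0)) + (h (max y 0) - h (max (-y) 0)) := by
    intro x y
    have e1 : max (x + y) 0 + (max (-x) 0 + max (-y) 0)
        = max (-(x + y)) 0 + (max x 0 + max y 0) := by
      simp only [max_def]
      split_ifs <;> linarith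
    have l1 : h (max (x + y) 0 + (max (-x) 0 + max (-y) 0))
        = h (max (x + y) 0) + h (max (-x) 0) + h (max (-y) 0) := by
      rw [← add_assoc]
      exact key3 _ _ _ (le_max_right _ _) (le_max_right _ _) (le_max_right _ _)
    have l2 : h (max (-(x + y)) 0 + (max x 0 + max y 0))
        = h (max (-(x + y)) 0) + h (max x 0) + h (max y 0) := by
      rw [← add_assoc]
      exact key3 _ _ _ (le_max_right _ _) (le_max_right _ _) (le_max_right _ _)
    have := l1.symm.trans (by rw [e1, l2])
    linarith
  set F : ℝ →+ ℝ := AddMonoidHom.mk' (fun x => h (max x 0) - h (max (-x) 0)) hadd_ext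
    with hF_def
  have hFcont : Continuous F := by
    have c1 : Continuous fun x : ℝ => h (max x 0) :=
      hcont_h.comp_continuous (continuous_id.max continuous_const)
        (fun x => Set.mem_Ici.mpr (le_max_right _ _))
    have c2 : Continuous fun x : ℝ => h (max (-x) 0) :=
      hcont_h.comp_continuous (continuous_neg.max continuous_const)
        (fun x => Set.mem_Ici.mpr (le_max_right _ _))
    exact c1.sub c2
  have hFlin : ∀ x : ℝ, F x = x * F 1 := by
    intro x
    have := (F.toRealLinearMap hFcont).map_smul x 1
    simpa [AddMonoidHom.coe_toRealLinearMap, smul_eq_mul, mul_comm] using this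
  set μ : ℝ := -h 1 with hμ_def
  have hdiag : ∀ t : ℝ, 0 ≤ t → S t t = Real.exp (-μ * t) := by
    intro t ht
    have hFt : F t = h t := by
      simp [hF_def, AddMonoidHom.mk'_apply, max_eq_left ht,
        max_eq_right (neg_nonpos.mpr ht), h0]
    have hF1 : F 1 = h 1 := by
      have : max (-1 : ℝ) 0 = 0 := by norm_num
      simp [hF_def, AddMonoidHom.mk'_apply, h0, max_eq_left (zero_le_one), this]
    have : h t = t * h 1 := by rw [← hFt, hFlin, hF1]
    have hlog : Real.log (S t t) = -μ * t := by
      simp only [hh_def] at this ⊢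
      rw [this]; simp [hμ_def]; ring
    calc S t t = Real.exp (Real.log (S t t)) := (Real.exp_log (hpos t ht)).symm
      _ = Real.exp (-μ * t) := by rw [hlog]
  -- μ ≥ m2
  have hμm2 : m2 ≤ μ := by
    have hq := h2incr 0 1 1 2 le_rfl zero_le_one zero_le_one one_le_two
    have h12 : S 1 2 = S 1 1 * S 0 1 := by
      have := hLOM 1 0 1 zero_le_one le_rfl zero_le_one
      norm_num at this
      exact this
    rw [h12, hS2 1 zero_le_one, hS2 2 zero_le_two, hdiag 1 zero_le_one] at hq
    have h22 : Real.exp (-m2 * 2) = Real.exp (-m2 * 1) * Real.exp (-m2 * 1) := by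
      rw [← Real.exp_add]; ring_nf
    rw [h22] at hq
    set A := Real.exp (-m2 * 1) with hA_def
    set B := Real.exp (-μ * 1) with hB_def
    have hA1 : A < 1 := by
      rw [hA_def, Real.exp_lt_one_iff]; nlinarith
    have hA0 : 0 < A := Real.exp_pos _
    have hBA : B ≤ A := by nlinarith
    have := Real.exp_le_exp.mp (hB_def ▸ hA_def ▸ hBA)
    linarith
  -- μ ≥ m1
  have hμm1 : m1 ≤ μ := by
    have hq := h2incr 1 2 0 1 zero_le_one one_le_two le_rfl zero_le_one
    have h21 : S 2 1 = S 1 1 * S 1 0 := by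
      have := hLOM 1 1 0 zero_le_one zero_le_one le_rfl
      norm_num at this
      exact this
    rw [h21, hS1 1 zero_le_one, hS1 2 zero_le_two, hdiag 1 zero_le_one] at hq
    have h22 : Real.exp (-m1 * 2) = Real.exp (-m1 * 1) * Real.exp (-m1 * 1) := by
      rw [← Real.exp_add]; ring_nf
    rw [h22] at hq
    set A := Real.exp (-m1 * 1) with hA_def
    set B := Real.exp (-μ * 1) with hB_def
    have hA1 : A < 1 := by
      rw [hA_def, Real.exp_lt_one_iff]; nlinarith
    have hA0 : 0 < A := Real.exp_pos _
    have hBA : B ≤ A := by nlinarith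
    have := Real.exp_le_exp.mp (hB_def ▸ hA_def ▸ hBA)
    linarith
  -- μ ≤ m1 + m2 via derivative at 0
  have hμsum : μ ≤ m1 + m2 := by
    set g : ℝ → ℝ := fun t => Real.exp (-m1 * t) + Real.exp (-m2 * t)
      - Real.exp (-μ * t) - 1 with hg_def
    have hg0 : g 0 = 0 := by simp [hg_def]
    have hgle : ∀ t : ℝ, 0 ≤ t → g t ≤ 0 := by
      intro t ht
      have hq := h2incr 0 t 0 t le_rfl ht le_rfl ht
      rw [h00, hS1 t ht, hS2 t ht, hdiag t ht] at hq
      simp only [hg_def]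
      linarith
    have hder : HasDerivAt g (-m1 - m2 + μ) 0 := by
      have d1 : HasDerivAt (fun t : ℝ => Real.exp (-m1 * t)) (-m1) 0 := by
        have := ((hasDerivAt_id (0:ℝ)).const_mul (-m1)).exp
        simpa using this
      have d2 : HasDerivAt (fun t : ℝ => Real.exp (-m2 * t)) (-m2) 0 := by
        have := ((hasDerivAt_id (0:ℝ)).const_mul (-m2)).exp
        simpa using this
      have d3 : HasDerivAt (fun t : ℝ => Real.exp (-μ * t)) (-μ) 0 := by
        have := ((hasDerivAt_id (0:ℝ)).const_mul (-μ)).exp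
        simpa using this
      have := ((d1.add d2).sub d3).sub_const 1
      have e : (-m1 - m2 + μ) = -m1 + -m2 - -μ := by ring
      rw [e]; exact this
    have hdw : HasDerivWithinAt g (-m1 - m2 + μ) (Set.Ioi 0) 0 :=
      hder.hasDerivWithinAt
    rw [hasDerivWithinAt_iff_tendsto_slope] at hdw
    have hIoi : Set.Ioi (0:ℝ) \ {0} = Set.Ioi 0 := by
      apply Set.diff_singleton_eq_self
      simp
    rw [hIoi] at hdw
    have hle : ∀ᶠ t in nhdsWithin 0 (Set.Ioi (0:ℝ)), slope g 0 t ≤ 0 := by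
      filter_upwards [self_mem_nhdsWithin] with t ht
      have ht' : (0:ℝ) < t := ht
      rw [slope_def_field]
      have : (g t - g 0) / (t - 0) ≤ 0 := by
        apply div_nonpos_of_nonpos_of_nonneg
        · rw [hg0]; simpa using hgle t ht'.le
        · linarith
      simpa [div_eq_inv_mul] using this
    have := le_of_tendsto hdw hle
    linarith
  -- conclude
  refine ⟨μ - m2, μ - m1, m1 + m2 - μ, by linarith, by linarith, by linarith, ?_⟩
  intro t1 t2 ht1 ht2
  rcases le_total t2 t1 with hle | hle
  · have := hLOM t2 (t1 - t2) 0 ht2 (by linarith) le_rfl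
    rw [add_zero, add_sub_cancel] at this
    rw [this, hdiag t2 ht2, hS1 (t1 - t2) (by linarith), ← Real.exp_add,
      max_eq_left hle]
    congr 1
    ring
  · have := hLOM t1 0 (t2 - t1) ht1 le_rfl (by linarith)
    rw [add_zero, add_sub_cancel] at this
    rw [this, hdiag t1 ht1, hS2 (t2 - t1) (by linarith), ← Real.exp_add,
      max_eq_right hle]
    congr 1
    ring
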